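/- Let ρ > 0, σ̃ > 0, and let h : ℝ → ℝ be twice continuously differentiable with c ≤ h''(y) ≤ C for all y ∈ ℝ, where 0 < c < C. Define p₁(x) = ∫_0^∞ e^{−ρt} ( ∫_ℝ h(x + y) dγ_{σ̃²t}(y) ) dt, where γ_v denotes the centered Gaussian measure on ℝ with variance v (and γ_0 is the Dirac mass at 0). Then the defining integral converges for every x ∈ ℝ, p₁ is twice differentiable on ℝ, and c/ρ ≤ p₁''(x) ≤ C/ρ for every x ∈ ℝ. -/

import Mathlib

open MeasureTheory ProbabilityTheory Real Set
open scoped NNReal ENNReal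

noncomputable def stdG : Measure ℝ := gaussianReal 0 1

instance : IsProbabilityMeasure stdG := by unfold stdG; infer_instance

noncomputable def K1 : ℝ := ∫ z, |z| ∂stdG
noncomputable def K2 : ℝ := ∫ z, z ^ 2 ∂stdG

lemma stdG_eq : stdG = (volume : Measure ℝ).withDensity (gaussianPDF 0 1) := by
  unfold stdG
  exact gaussianReal_of_var_ne_zero 0 one_ne_zero

lemma pdf_eq (y : ℝ) : (gaussianPDF 0 1 y).toReal = (Real.sqrt (2 * π))⁻¹ * Real.exp (-(1/2) * y ^ 2) := by
  rw [gaussianPDF, ENNReal.toReal_ofReal (gaussianPDFReal_nonneg _ _ _)]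
  simp only [gaussianPDFReal, NNReal.coe_one, mul_one, sub_zero]
  ring_nf

lemma integrable_abs_stdG : Integrable (fun z : ℝ => |z|) stdG := by
  rw [stdG_eq, integrable_withDensity_iff (measurable_gaussianPDF 0 1)
    (ae_of_all _ fun y => ENNReal.ofReal_lt_top)]
  have base : Integrable (fun y : ℝ => |y| * Real.exp (-(1/2) * y ^ 2)) volume := by
    simpa [abs_mul, abs_of_pos (Real.exp_pos _)]
      using (integrable_mul_exp_neg_mul_sq (b := (1/2:ℝ)) (by norm_num)).abs
  have : Integrable (fun y : ℝ => (Real.sqrt (2 * π))⁻¹ * (|y| * Real.exp (-(1/2) * y ^ 2))) volume :=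
    base.const_mul _
  exact this.congr (ae_of_all _ fun y => by simp only [pdf_eq]; ring)

lemma integrable_sq_stdG : Integrable (fun z : ℝ => z ^ 2) stdG := by
  rw [stdG_eq, integrable_withDensity_iff (measurable_gaussianPDF 0 1)
    (ae_of_all _ fun y => ENNReal.ofReal_lt_top)]
  have base : Integrable (fun y : ℝ => y ^ 2 * Real.exp (-(1/2) * y ^ 2)) volume := by
    have := integrable_rpow_mul_exp_neg_mul_sq (b := (1/2:ℝ)) (by norm_num) (s := 2) (by norm_num)
    have h2 : (fun x : ℝ => x ^ (2:ℝ) * Real.exp (-(1/2) * x ^ 2))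
        = fun x : ℝ => x ^ 2 * Real.exp (-(1/2) * x ^ 2) := by
      funext x
      rw [show (2:ℝ) = ((2:ℕ):ℝ) by norm_num, Real.rpow_natCast]
    rwa [h2] at this
  have : Integrable (fun y : ℝ => (Real.sqrt (2 * π))⁻¹ * (y ^ 2 * Real.exp (-(1/2) * y ^ 2))) volume :=
    base.const_mul _
  exact this.congr (ae_of_all _ fun y => by simp only [pdf_eq]; ring)

lemma K1_nonneg : 0 ≤ K1 := integral_nonneg fun z => abs_nonneg z
lemma K2_nonneg : 0 ≤ K2 := integral_nonneg fun z => sq_nonneg z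

lemma integrable_lin (A B : ℝ) : Integrable (fun z : ℝ => A + B * |z|) stdG :=
  (integrable_const A).add (integrable_abs_stdG.const_mul B)

lemma integrable_linquad (A B K : ℝ) : Integrable (fun z : ℝ => A + B * |z| + K * z ^ 2) stdG :=
  (integrable_lin A B).add (integrable_sq_stdG.const_mul K)

lemma integrable_of_quad (f : ℝ → ℝ) (hf : Continuous f) (A B K : ℝ)
    (hb : ∀ z, |f z| ≤ A + B * |z| + K * z ^ 2) : Integrable f stdG :=
  (integrable_linquad A B K).mono' hf.aestronglyMeasurable
    (ae_of_all _ fun z => by simpa [Real.norm_eq_abs] using hb z)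

lemma integral_linquad (A B K : ℝ) :
    ∫ z, (A + B * |z| + K * z ^ 2) ∂stdG = A + B * K1 + K * K2 := by
  rw [integral_add (integrable_lin A B) (integrable_sq_stdG.const_mul K),
    integral_add (integrable_const A) (integrable_abs_stdG.const_mul B),
    integral_const, integral_const_mul, integral_const_mul]
  simp [K1, K2, measure_univ]

lemma abs_integral_le_quad (f : ℝ → ℝ) (hf : Continuous f) (A B K : ℝ)
    (hb : ∀ z, |f z| ≤ A + B * |z| + K * z ^ 2) :
    |∫ z, f z ∂stdG| ≤ A + B * K1 + K * K2 := by
  calc |∫ z, f z ∂stdG| ≤ ∫ z, |f z| ∂stdG := by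
        simpa [Real.norm_eq_abs] using
          norm_integral_le_integral_norm (μ := stdG) (f := f)
    _ ≤ ∫ z, (A + B * |z| + K * z ^ 2) ∂stdG :=
        integral_mono (integrable_of_quad f hf A B K hb).abs (integrable_linquad A B K) hb
    _ = A + B * K1 + K * K2 := integral_linquad A B K

lemma gauss_map (v : ℝ≥0) :
    gaussianReal 0 v = stdG.map (fun z => Real.sqrt (v:ℝ) * z) := by
  have hv : (NNReal.mk ((Real.sqrt (v:ℝ)) ^ 2) (sq_nonneg _) * 1 : ℝ≥0) = v := by
    rw [mul_one]; exact NNReal.eq (Real.sq_sqrt v.2)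
  have h := gaussianReal_map_const_mul (μ := 0) (v := 1) (Real.sqrt (v:ℝ))
  rw [mul_zero, hv] at h
  rw [← h]
  rfl

lemma integral_gauss_scale (v : ℝ≥0) (f : ℝ → ℝ) (hf : Continuous f) :
    ∫ y, f y ∂(gaussianReal 0 v) = ∫ z, f (Real.sqrt (v:ℝ) * z) ∂stdG := by
  rw [gauss_map v, integral_map (measurable_const_mul _).aemeasurable hf.aestronglyMeasurable]

lemma integrable_gauss_scale (v : ℝ≥0) (f : ℝ → ℝ) (hf : Continuous f)
    (hi : Integrable (fun z => f (Real.sqrt (v:ℝ) * z)) stdG) :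
    Integrable f (gaussianReal 0 v) := by
  rw [gauss_map v]
  by_cases hv : Real.sqrt (v:ℝ) = 0
  · rw [show (fun z : ℝ => Real.sqrt (v:ℝ) * z) = fun _ => (0:ℝ) by
      funext z; rw [hv, zero_mul], Measure.map_const]
    simp only [measure_univ, one_smul]
    exact (integrable_const (f 0)).congr (MeasureTheory.ae_eq_dirac f).symm
  · exact ((measurableEmbedding_mulLeft₀ hv).integrable_map_iff).mpr hi

lemma inner_hasDerivAt (f : ℝ → ℝ) (hfd : Differentiable ℝ f) (hf'c : Continuous (deriv f))
    (P Q : ℝ) (hQ : 0 ≤ Q) (hb' : ∀ y, |deriv f y| ≤ P + Q * |y|)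
    (a x : ℝ) (hfi : Integrable (fun z => f (x + a * z)) stdG) :
    HasDerivAt (fun x' => ∫ z, f (x' + a * z) ∂stdG) (∫ z, deriv f (x + a * z) ∂stdG) x := by
  have hcomp : ∀ x' z : ℝ, HasDerivAt (fun w => f (w + a * z)) (deriv f (x' + a * z)) x' := by
    intro x' z
    have := (hfd (x' + a * z)).hasDerivAt.comp x' ((hasDerivAt_id' x').add_const (a * z))
    rw [mul_one] at this
    exact this
  have hmeas : ∀ x' : ℝ, AEStronglyMeasurable (fun z => f (x' + a * z)) stdG := fun x' =>
    (hfd.continuous.comp (by continuity)).aestronglyMeasurable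
  refine (hasDerivAt_integral_of_dominated_loc_of_deriv_le (Metric.ball_mem_nhds x zero_lt_one)
    (Filter.Eventually.of_forall hmeas) hfi
    (F' := fun x' z => deriv f (x' + a * z))
    ((hf'c.comp (by continuity)).aestronglyMeasurable)
    (bound := fun z => (P + Q * (|x| + 1)) + (Q * |a|) * |z|)
    (ae_of_all _ fun z x' hx' => ?_)
    (integrable_lin _ _)
    (ae_of_all _ fun z x' _ => hcomp x' z)).2
  have h1 : |x'| ≤ |x| + 1 := by
    have h2 : |x' - x| < 1 := by simpa [Real.dist_eq] using Metric.mem_ball.mp hx'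
    have := abs_sub_abs_le_abs_sub x' x
    linarith
  have h3 : |x' + a * z| ≤ |x| + 1 + |a| * |z| := by
    calc |x' + a * z| ≤ |x'| + |a * z| := abs_add_le _ _
      _ ≤ |x| + 1 + |a| * |z| := by rw [abs_mul]; linarith
  calc ‖deriv f (x' + a * z)‖ = |deriv f (x' + a * z)| := rfl
    _ ≤ P + Q * |x' + a * z| := hb' _
    _ ≤ (P + Q * (|x| + 1)) + (Q * |a|) * |z| := by nlinarith [mul_le_mul_of_nonneg_left h3 hQ]

lemma exp_bound (ρ : ℝ) (hρ : 0 < ρ) (a0 a1 a2 t : ℝ)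
    (h0 : 0 ≤ a0) (h1 : 0 ≤ a1) (h2 : 0 ≤ a2) (ht : 0 ≤ t) :
    Real.exp (-ρ * t) * (a0 + a1 * Real.sqrt t + a2 * t)
      ≤ (a0 + a1 + (a1 + a2) * (2 / ρ)) * Real.exp (-(ρ / 2) * t) := by
  have hs : Real.sqrt t ≤ 1 + t := by
    have h4 : t ≤ (1 + t) ^ 2 := by nlinarith
    calc Real.sqrt t ≤ Real.sqrt ((1 + t) ^ 2) := Real.sqrt_le_sqrt h4
      _ = 1 + t := Real.sqrt_sq (by linarith)
  have he1 : Real.exp (-ρ * t) ≤ Real.exp (-(ρ / 2) * t) :=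
    Real.exp_le_exp.mpr (by nlinarith)
  have he2 : Real.exp (-(ρ / 2) * t) ≤ 1 := Real.exp_le_one_iff.mpr (by nlinarith)
  have hu : t * Real.exp (-(ρ / 2) * t) ≤ 2 / ρ := by
    have h5 : (ρ / 2 * t) ≤ Real.exp (ρ / 2 * t) := by
      have := Real.add_one_le_exp (ρ / 2 * t); linarith
    have h6 : Real.exp (-(ρ / 2) * t) = (Real.exp (ρ / 2 * t))⁻¹ := by
      rw [← Real.exp_neg]; ring_nf
    rw [h6, mul_inv_le_iff₀ (Real.exp_pos _)]
    calc t = (2 / ρ) * (ρ / 2 * t) := by field_simp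
      _ ≤ (2 / ρ) * Real.exp (ρ / 2 * t) := by
          apply mul_le_mul_of_nonneg_left h5 (by positivity)
  have ht2 : t * Real.exp (-ρ * t) ≤ (2 / ρ) * Real.exp (-(ρ / 2) * t) := by
    have : Real.exp (-ρ * t) = Real.exp (-(ρ / 2) * t) * Real.exp (-(ρ / 2) * t) := by
      rw [← Real.exp_add]; ring_nf
    rw [this]
    calc t * (Real.exp (-(ρ / 2) * t) * Real.exp (-(ρ / 2) * t))
        = (t * Real.exp (-(ρ / 2) * t)) * Real.exp (-(ρ / 2) * t) := by ring
      _ ≤ (2 / ρ) * Real.exp (-(ρ / 2) * t) :=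
          mul_le_mul_of_nonneg_right hu (Real.exp_nonneg _)
  have hsum : Real.exp (-ρ * t) * (a0 + a1 * Real.sqrt t + a2 * t)
      ≤ Real.exp (-ρ * t) * (a0 + a1 + (a1 + a2) * t) := by
    apply mul_le_mul_of_nonneg_left _ (Real.exp_nonneg _)
    nlinarith [mul_le_mul_of_nonneg_left hs h1]
  calc Real.exp (-ρ * t) * (a0 + a1 * Real.sqrt t + a2 * t)
      ≤ Real.exp (-ρ * t) * (a0 + a1 + (a1 + a2) * t) := hsum
    _ = (a0 + a1) * Real.exp (-ρ * t) + (a1 + a2) * (t * Real.exp (-ρ * t)) := by ring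
    _ ≤ (a0 + a1) * Real.exp (-(ρ / 2) * t) + (a1 + a2) * ((2 / ρ) * Real.exp (-(ρ / 2) * t)) := by
        have := mul_le_mul_of_nonneg_left he1 (by linarith : (0:ℝ) ≤ a0 + a1)
        have := mul_le_mul_of_nonneg_left ht2 (by linarith : (0:ℝ) ≤ a1 + a2)
        linarith
    _ = (a0 + a1 + (a1 + a2) * (2 / ρ)) * Real.exp (-(ρ / 2) * t) := by ring

lemma comp_quad_bound (f : ℝ → ℝ) (A B K : ℝ) (hB : 0 ≤ B) (hK : 0 ≤ K)
    (hbf : ∀ y, |f y| ≤ A + B * |y| + K * y ^ 2) (b s z : ℝ) :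
    |f (b + s * z)| ≤ (A + B * |b| + 2 * K * b ^ 2) + (B * |s|) * |z| + (2 * K * s ^ 2) * z ^ 2 := by
  have h1 := hbf (b + s * z)
  have h2 : |b + s * z| ≤ |b| + |s| * |z| := (abs_add_le _ _).trans (by rw [abs_mul])
  have h3 : (b + s * z) ^ 2 ≤ 2 * b ^ 2 + 2 * (s ^ 2 * z ^ 2) := by
    nlinarith [sq_nonneg (b - s * z), sq_nonneg (s * z), mul_pow s z 2]
  have h4 := mul_le_mul_of_nonneg_left h2 hB
  have h5 := mul_le_mul_of_nonneg_left h3 hK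
  nlinarith

lemma outer (ρ σ : ℝ) (hρ : 0 < ρ) (hσ : 0 < σ) (f : ℝ → ℝ)
    (hfd : Differentiable ℝ f) (hf'c : Continuous (deriv f))
    (A B K P Q : ℝ) (hA : 0 ≤ A) (hB : 0 ≤ B) (hK : 0 ≤ K) (hP : 0 ≤ P) (hQ : 0 ≤ Q)
    (hbf : ∀ y, |f y| ≤ A + B * |y| + K * y ^ 2)
    (hbf' : ∀ y, |deriv f y| ≤ P + Q * |y|)
    (x : ℝ) :
    IntegrableOn (fun t => Real.exp (-ρ * t) * ∫ z, f (x + σ * Real.sqrt t * z) ∂stdG)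
      (Ioi (0:ℝ)) ∧
    IntegrableOn (fun t => Real.exp (-ρ * t) * ∫ z, deriv f (x + σ * Real.sqrt t * z) ∂stdG)
      (Ioi (0:ℝ)) ∧
    HasDerivAt
      (fun x' => ∫ t in Ioi (0:ℝ), Real.exp (-ρ * t) * ∫ z, f (x' + σ * Real.sqrt t * z) ∂stdG)
      (∫ t in Ioi (0:ℝ), Real.exp (-ρ * t) * ∫ z, deriv f (x + σ * Real.sqrt t * z) ∂stdG) x := by
  -- measurability in t
  have meas : ∀ x' : ℝ, AEStronglyMeasurable
      (fun t => Real.exp (-ρ * t) * ∫ z, f (x' + σ * Real.sqrt t * z) ∂stdG)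
      (volume.restrict (Ioi (0:ℝ))) := by
    intro x'
    have jc : Continuous fun p : ℝ × ℝ => f (x' + σ * Real.sqrt p.1 * p.2) :=
      hfd.continuous.comp (by continuity)
    have sm : StronglyMeasurable fun t => ∫ z, f (x' + σ * Real.sqrt t * z) ∂stdG :=
      jc.stronglyMeasurable.integral_prod_right'
    exact (((Real.continuous_exp.comp (by continuity)).stronglyMeasurable.mul
      sm).aestronglyMeasurable).restrict
  have meas' : AEStronglyMeasurable
      (fun t => Real.exp (-ρ * t) * ∫ z, deriv f (x + σ * Real.sqrt t * z) ∂stdG)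
      (volume.restrict (Ioi (0:ℝ))) := by
    have jc : Continuous fun p : ℝ × ℝ => deriv f (x + σ * Real.sqrt p.1 * p.2) :=
      hf'c.comp (by continuity)
    have sm : StronglyMeasurable fun t => ∫ z, deriv f (x + σ * Real.sqrt t * z) ∂stdG :=
      jc.stronglyMeasurable.integral_prod_right'
    exact (((Real.continuous_exp.comp (by continuity)).stronglyMeasurable.mul
      sm).aestronglyMeasurable).restrict
  -- integrability in z
  have int_comp : ∀ b s : ℝ, Integrable (fun z => f (b + s * z)) stdG := fun b s =>
    integrable_of_quad _ (hfd.continuous.comp (by continuity)) _ _ _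
      (comp_quad_bound f A B K hB hK hbf b s)
  -- pointwise bound on |inner integral|
  have Iabs : ∀ b s : ℝ, |∫ z, f (b + s * z) ∂stdG|
      ≤ (A + B * |b| + 2 * K * b ^ 2) + (B * |s|) * K1 + (2 * K * s ^ 2) * K2 := fun b s =>
    abs_integral_le_quad _ (hfd.continuous.comp (by continuity)) _ _ _
      (comp_quad_bound f A B K hB hK hbf b s)
  have Iabs' : ∀ b s : ℝ, |∫ z, deriv f (b + s * z) ∂stdG|
      ≤ (P + Q * |b| + 2 * 0 * b ^ 2) + (Q * |s|) * K1 + (2 * 0 * s ^ 2) * K2 := fun b s =>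
    abs_integral_le_quad _ (hf'c.comp (by continuity)) _ _ _
      (comp_quad_bound (deriv f) P Q 0 hQ le_rfl (fun y => by simpa using hbf' y) b s)
  -- simplifications about σ √t for t > 0
  have hst : ∀ t : ℝ, 0 < t → |σ * Real.sqrt t| = σ * Real.sqrt t := fun t ht =>
    abs_of_nonneg (by positivity)
  have hst2 : ∀ t : ℝ, 0 < t → (σ * Real.sqrt t) ^ 2 = σ ^ 2 * t := fun t ht => by
    rw [mul_pow, Real.sq_sqrt ht.le]
  -- integrability of F x
  have hF_int : ∀ x' : ℝ, IntegrableOn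
      (fun t => Real.exp (-ρ * t) * ∫ z, f (x' + σ * Real.sqrt t * z) ∂stdG) (Ioi (0:ℝ)) := by
    intro x'
    set a0 : ℝ := A + B * |x'| + 2 * K * x' ^ 2 with ha0
    set a1 : ℝ := B * σ * K1 with ha1
    set a2 : ℝ := 2 * K * σ ^ 2 * K2 with ha2
    have h0 : 0 ≤ a0 :=
      add_nonneg (add_nonneg hA (mul_nonneg hB (abs_nonneg _)))
        (mul_nonneg (by linarith) (sq_nonneg _))
    have h1 : 0 ≤ a1 := mul_nonneg (mul_nonneg hB hσ.le) K1_nonneg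
    have h2 : 0 ≤ a2 := mul_nonneg (mul_nonneg (by linarith) (sq_nonneg _)) K2_nonneg
    refine Integrable.mono'
      ((exp_neg_integrableOn_Ioi 0 (half_pos hρ)).const_mul (a0 + a1 + (a1 + a2) * (2 / ρ)))
      (meas x') ?_
    rw [ae_restrict_iff' measurableSet_Ioi]
    refine ae_of_all _ fun t ht => ?_
    have ht' : (0:ℝ) < t := ht
    have hIb : |∫ z, f (x' + σ * Real.sqrt t * z) ∂stdG|
        ≤ a0 + a1 * Real.sqrt t + a2 * t := by
      have := Iabs x' (σ * Real.sqrt t)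
      rw [hst t ht', hst2 t ht'] at this
      calc |∫ z, f (x' + σ * Real.sqrt t * z) ∂stdG|
          ≤ a0 + B * (σ * Real.sqrt t) * K1 + 2 * K * (σ ^ 2 * t) * K2 := this
        _ = a0 + a1 * Real.sqrt t + a2 * t := by ring
    calc ‖Real.exp (-ρ * t) * ∫ z, f (x' + σ * Real.sqrt t * z) ∂stdG‖
        = Real.exp (-ρ * t) * |∫ z, f (x' + σ * Real.sqrt t * z) ∂stdG| := by
          rw [Real.norm_eq_abs, abs_mul, abs_of_pos (Real.exp_pos _)]
      _ ≤ Real.exp (-ρ * t) * (a0 + a1 * Real.sqrt t + a2 * t) :=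
          mul_le_mul_of_nonneg_left hIb (Real.exp_nonneg _)
      _ ≤ (a0 + a1 + (a1 + a2) * (2 / ρ)) * Real.exp (-(ρ / 2) * t) :=
          exp_bound ρ hρ a0 a1 a2 t h0 h1 h2 ht'.le
  -- now the derivative
  set b0 : ℝ := P + Q * (|x| + 1) with hb0
  set b1 : ℝ := Q * σ * K1 with hb1
  have hb0' : 0 ≤ b0 :=
    add_nonneg hP (mul_nonneg hQ (by positivity))
  have hb1' : 0 ≤ b1 := mul_nonneg (mul_nonneg hQ hσ.le) K1_nonneg
  have hbnd : ∀ᵐ t ∂(volume.restrict (Ioi (0:ℝ))), ∀ x' ∈ Metric.ball x 1,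
      ‖Real.exp (-ρ * t) * ∫ z, deriv f (x' + σ * Real.sqrt t * z) ∂stdG‖
        ≤ (b0 + b1 + (b1 + 0) * (2 / ρ)) * Real.exp (-(ρ / 2) * t) := by
    rw [ae_restrict_iff' measurableSet_Ioi]
    refine ae_of_all _ fun t ht x' hx' => ?_
    have ht' : (0:ℝ) < t := ht
    have hx'' : |x'| ≤ |x| + 1 := by
      have h2 : |x' - x| < 1 := by simpa [Real.dist_eq] using Metric.mem_ball.mp hx'
      have := abs_sub_abs_le_abs_sub x' x
      linarith
    have hIb : |∫ z, deriv f (x' + σ * Real.sqrt t * z) ∂stdG|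
        ≤ b0 + b1 * Real.sqrt t + 0 * t := by
      have := Iabs' x' (σ * Real.sqrt t)
      rw [hst t ht'] at this
      have hQx : Q * |x'| ≤ Q * (|x| + 1) := mul_le_mul_of_nonneg_left hx'' hQ
      calc |∫ z, deriv f (x' + σ * Real.sqrt t * z) ∂stdG|
          ≤ (P + Q * |x'| + 2 * 0 * x' ^ 2) + (Q * (σ * Real.sqrt t)) * K1
              + (2 * 0 * (σ * Real.sqrt t) ^ 2) * K2 := this
        _ ≤ b0 + b1 * Real.sqrt t + 0 * t := by rw [hb0, hb1]; nlinarith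
    calc ‖Real.exp (-ρ * t) * ∫ z, deriv f (x' + σ * Real.sqrt t * z) ∂stdG‖
        = Real.exp (-ρ * t) * |∫ z, deriv f (x' + σ * Real.sqrt t * z) ∂stdG| := by
          rw [Real.norm_eq_abs, abs_mul, abs_of_pos (Real.exp_pos _)]
      _ ≤ Real.exp (-ρ * t) * (b0 + b1 * Real.sqrt t + 0 * t) :=
          mul_le_mul_of_nonneg_left hIb (Real.exp_nonneg _)
      _ ≤ (b0 + b1 + (b1 + 0) * (2 / ρ)) * Real.exp (-(ρ / 2) * t) :=
          exp_bound ρ hρ b0 b1 0 t hb0' hb1' le_rfl ht'.le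
  have hdiff : ∀ᵐ t ∂(volume.restrict (Ioi (0:ℝ))), ∀ x' ∈ Metric.ball x 1,
      HasDerivAt (fun w => Real.exp (-ρ * t) * ∫ z, f (w + σ * Real.sqrt t * z) ∂stdG)
        (Real.exp (-ρ * t) * ∫ z, deriv f (x' + σ * Real.sqrt t * z) ∂stdG) x' := by
    refine ae_of_all _ fun t x' _ => ?_
    exact (inner_hasDerivAt f hfd hf'c P Q hQ hbf' (σ * Real.sqrt t) x'
      (int_comp x' (σ * Real.sqrt t))).const_mul (Real.exp (-ρ * t))
  have main := hasDerivAt_integral_of_dominated_loc_of_deriv_le (Metric.ball_mem_nhds x zero_lt_one)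
    (Filter.Eventually.of_forall meas) (hF_int x)
    (F' := fun x' t => Real.exp (-ρ * t) * ∫ z, deriv f (x' + σ * Real.sqrt t * z) ∂stdG)
    meas'
    (bound := fun t => (b0 + b1 + (b1 + 0) * (2 / ρ)) * Real.exp (-(ρ / 2) * t))
    hbnd
    ((exp_neg_integrableOn_Ioi 0 (half_pos hρ)).const_mul _)
    hdiff
  exact ⟨hF_int x, main.1, main.2⟩

/-- `p₁(x) = ∫_0^∞ e^{−ρt} E[h(x + σ̃ B_t)] dt`, written with the centered Gaussian measure
of variance `σ̃²t` (which is the Dirac mass at `0` when `t = 0`). -/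
noncomputable def p1 (ρ σ : ℝ) (h : ℝ → ℝ) (x : ℝ) : ℝ :=
  ∫ t in Set.Ioi (0:ℝ), Real.exp (-ρ * t) *
    ∫ y, h (x + y) ∂(gaussianReal 0 (Real.toNNReal (σ ^ 2 * t)))

/-- Convergence of the defining integrals of `p₁`, twice differentiability of `p₁`, and the
bounds `c/ρ ≤ p₁'' ≤ C/ρ`, for `h ∈ C²` with `c ≤ h'' ≤ C`. -/
theorem p1_integrable_twice_differentiable_and_second_deriv_bounds
    (ρ σ : ℝ) (hρ : 0 < ρ) (hσ : 0 < σ)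
    (h : ℝ → ℝ) (hh : ContDiff ℝ 2 h)
    (c C : ℝ) (hc : 0 < c) (hcC : c < C)
    (hbound : ∀ y : ℝ, c ≤ deriv (deriv h) y ∧ deriv (deriv h) y ≤ C) :
    (∀ x t : ℝ, Integrable (fun y => h (x + y))
        (gaussianReal 0 (Real.toNNReal (σ ^ 2 * t)))) ∧
    (∀ x : ℝ, IntegrableOn
        (fun t => Real.exp (-ρ * t) *
          ∫ y, h (x + y) ∂(gaussianReal 0 (Real.toNNReal (σ ^ 2 * t))))
        (Set.Ioi (0:ℝ))) ∧
    (Differentiable ℝ (p1 ρ σ h) ∧ Differentiable ℝ (deriv (p1 ρ σ h))) ∧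
    (∀ x : ℝ, c / ρ ≤ deriv (deriv (p1 ρ σ h)) x ∧
      deriv (deriv (p1 ρ σ h)) x ≤ C / ρ) := by
  -- regularity of h
  have hd1 : Differentiable ℝ h := hh.differentiable (by norm_num)
  have hC1 : ContDiff ℝ 1 (deriv h) :=
    (contDiff_succ_iff_deriv.mp (show ContDiff ℝ (1 + 1) h from by norm_num; exact hh)).2.2
  obtain ⟨hd2, hcont2⟩ := contDiff_one_iff_deriv.mp hC1
  have hcont1 : Continuous (deriv h) := hd2.continuous
  have hC0 : 0 ≤ C := by linarith
  set A : ℝ := |h 0| with hA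
  set B : ℝ := |deriv h 0| with hB
  have habs2 : ∀ y, |deriv (deriv h) y| ≤ C := fun y =>
    abs_le.mpr ⟨by linarith [(hbound y).1], (hbound y).2⟩
  have hgrow1 : ∀ y, |deriv h y| ≤ B + C * |y| := by
    intro y
    have key := Convex.norm_image_sub_le_of_norm_deriv_le (f := deriv h) (s := Set.univ)
      (fun w _ => (hd2 w)) (fun w _ => by simpa [Real.norm_eq_abs] using habs2 w)
      convex_univ (Set.mem_univ 0) (Set.mem_univ y)
    rw [Real.norm_eq_abs, Real.norm_eq_abs, sub_zero] at key
    have := abs_sub_abs_le_abs_sub (deriv h y) (deriv h 0)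
    linarith
  have hgrow0 : ∀ y, |h y| ≤ A + B * |y| + C * y ^ 2 := by
    intro y
    have key := Convex.norm_image_sub_le_of_norm_deriv_le (f := h)
      (s := Set.Icc (-|y|) (|y|)) (C := B + C * |y|)
      (fun w _ => (hd1 w))
      (fun w hw => by
        have hw' : |w| ≤ |y| := abs_le.mpr ⟨hw.1, hw.2⟩
        have := hgrow1 w
        rw [Real.norm_eq_abs]
        nlinarith)
      (convex_Icc _ _)
      (Set.mem_Icc.mpr ⟨neg_nonpos.mpr (abs_nonneg y), abs_nonneg y⟩)
      (Set.mem_Icc.mpr ⟨neg_abs_le y, le_abs_self y⟩)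
    rw [Real.norm_eq_abs, Real.norm_eq_abs, sub_zero] at key
    have h1 := abs_sub_abs_le_abs_sub (h y) (h 0)
    have h2 : |y| * |y| = y ^ 2 := by rw [← abs_mul, abs_mul_self]; ring
    nlinarith
  -- the inner-integral identity on Ioi 0
  have hIeq : ∀ x : ℝ, ∀ t ∈ Set.Ioi (0:ℝ),
      Real.exp (-ρ * t) * ∫ y, h (x + y) ∂(gaussianReal 0 (Real.toNNReal (σ ^ 2 * t)))
        = Real.exp (-ρ * t) * ∫ z, h (x + σ * Real.sqrt t * z) ∂stdG := by
    intro x t ht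
    have ht' : (0:ℝ) < t := ht
    congr 1
    have h1 : ((Real.toNNReal (σ ^ 2 * t) : ℝ≥0) : ℝ) = σ ^ 2 * t :=
      Real.coe_toNNReal _ (mul_nonneg (sq_nonneg σ) ht'.le)
    have h2 : Real.sqrt (σ ^ 2 * t) = σ * Real.sqrt t := by
      rw [Real.sqrt_mul (sq_nonneg σ), Real.sqrt_sq hσ.le]
    rw [integral_gauss_scale _ (fun y => h (x + y)) (hd1.continuous.comp (by continuity)),
      h1, h2]
  have hp1eq : p1 ρ σ h
      = fun x => ∫ t in Set.Ioi (0:ℝ),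
          Real.exp (-ρ * t) * ∫ z, h (x + σ * Real.sqrt t * z) ∂stdG := by
    funext x
    exact setIntegral_congr_fun measurableSet_Ioi (hIeq x)
  -- outer lemma applications
  have O1 := fun x => outer ρ σ hρ hσ h hd1 hcont1 A B C B C
    (abs_nonneg _) (abs_nonneg _) hC0 (abs_nonneg _) hC0 hgrow0 hgrow1 x
  have O2 := fun x => outer ρ σ hρ hσ (deriv h) hd2 hcont2 B C 0 C 0
    (abs_nonneg _) hC0 le_rfl hC0 le_rfl
    (fun y => by simpa using hgrow1 y) (fun y => by simpa using habs2 y) x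
  -- conclusion 1
  have concl1 : ∀ x t : ℝ, Integrable (fun y => h (x + y))
      (gaussianReal 0 (Real.toNNReal (σ ^ 2 * t))) := by
    intro x t
    exact integrable_gauss_scale _ _ (hd1.continuous.comp (by continuity))
      (integrable_of_quad _ (hd1.continuous.comp (by continuity)) _ _ _
        (comp_quad_bound h A B C (abs_nonneg _) hC0 hgrow0 x _))
  -- conclusion 2
  have concl2 : ∀ x : ℝ, IntegrableOn
      (fun t => Real.exp (-ρ * t) *
        ∫ y, h (x + y) ∂(gaussianReal 0 (Real.toNNReal (σ ^ 2 * t)))) (Set.Ioi (0:ℝ)) :=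
    fun x => ((O1 x).1).congr_fun (fun t ht => (hIeq x t ht).symm) measurableSet_Ioi
  -- derivatives
  have hder1 : ∀ x : ℝ, HasDerivAt (p1 ρ σ h)
      (∫ t in Set.Ioi (0:ℝ),
        Real.exp (-ρ * t) * ∫ z, deriv h (x + σ * Real.sqrt t * z) ∂stdG) x := by
    intro x
    rw [hp1eq]
    exact (O1 x).2.2
  have hderiv1 : deriv (p1 ρ σ h)
      = fun x => ∫ t in Set.Ioi (0:ℝ),
          Real.exp (-ρ * t) * ∫ z, deriv h (x + σ * Real.sqrt t * z) ∂stdG :=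
    funext fun x => (hder1 x).deriv
  have hder2 : ∀ x : ℝ, HasDerivAt (deriv (p1 ρ σ h))
      (∫ t in Set.Ioi (0:ℝ),
        Real.exp (-ρ * t) * ∫ z, deriv (deriv h) (x + σ * Real.sqrt t * z) ∂stdG) x := by
    intro x
    rw [hderiv1]
    exact (O2 x).2.2
  have hderiv2 : ∀ x : ℝ, deriv (deriv (p1 ρ σ h)) x
      = ∫ t in Set.Ioi (0:ℝ),
          Real.exp (-ρ * t) * ∫ z, deriv (deriv h) (x + σ * Real.sqrt t * z) ∂stdG :=
    fun x => (hder2 x).deriv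
  -- the exponential integral
  have hexpint : ∫ t in Set.Ioi (0:ℝ), Real.exp (-ρ * t) = 1 / ρ := by
    have h0 := integral_comp_mul_left_Ioi (fun u => Real.exp (-u)) 0 hρ
    simp only [mul_zero, integral_exp_neg_Ioi, neg_zero, Real.exp_zero, smul_eq_mul,
      mul_one] at h0
    simp only [neg_mul] at *
    rw [h0]
    rw [one_div]
  refine ⟨concl1, concl2, ⟨fun x => (hder1 x).differentiableAt,
    fun x => (hder2 x).differentiableAt⟩, fun x => ?_⟩
  -- bounds on the second derivative
  have key : ∀ t ∈ Set.Ioi (0:ℝ),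
      c * Real.exp (-ρ * t)
        ≤ Real.exp (-ρ * t) * ∫ z, deriv (deriv h) (x + σ * Real.sqrt t * z) ∂stdG
      ∧ Real.exp (-ρ * t) * ∫ z, deriv (deriv h) (x + σ * Real.sqrt t * z) ∂stdG
        ≤ C * Real.exp (-ρ * t) := by
    intro t ht
    have gcont : Continuous fun z => deriv (deriv h) (x + σ * Real.sqrt t * z) :=
      hcont2.comp (by continuity)
    have gint : Integrable (fun z => deriv (deriv h) (x + σ * Real.sqrt t * z)) stdG :=
      integrable_of_quad _ gcont C 0 0 (fun z => by simpa using habs2 _)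
    have hlow : c ≤ ∫ z, deriv (deriv h) (x + σ * Real.sqrt t * z) ∂stdG := by
      have h1 : ∫ (_ : ℝ), c ∂stdG = c := by simp
      rw [← h1]
      exact integral_mono (integrable_const c) gint (fun z => (hbound _).1)
    have hhigh : (∫ z, deriv (deriv h) (x + σ * Real.sqrt t * z) ∂stdG) ≤ C := by
      have h1 : ∫ (_ : ℝ), C ∂stdG = C := by simp
      rw [← h1]
      exact integral_mono gint (integrable_const C) (fun z => (hbound _).2)
    constructor
    · calc c * Real.exp (-ρ * t) = Real.exp (-ρ * t) * c := by ring
        _ ≤ _ := mul_le_mul_of_nonneg_left hlow (Real.exp_nonneg _)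
    · calc Real.exp (-ρ * t) * ∫ z, deriv (deriv h) (x + σ * Real.sqrt t * z) ∂stdG
          ≤ Real.exp (-ρ * t) * C := mul_le_mul_of_nonneg_left hhigh (Real.exp_nonneg _)
        _ = C * Real.exp (-ρ * t) := by ring
  have iexp_c : IntegrableOn (fun t => c * Real.exp (-ρ * t)) (Set.Ioi (0:ℝ)) :=
    (exp_neg_integrableOn_Ioi 0 hρ).const_mul c
  have iexp_C : IntegrableOn (fun t => C * Real.exp (-ρ * t)) (Set.Ioi (0:ℝ)) :=
    (exp_neg_integrableOn_Ioi 0 hρ).const_mul C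
  have iF : IntegrableOn
      (fun t => Real.exp (-ρ * t) * ∫ z, deriv (deriv h) (x + σ * Real.sqrt t * z) ∂stdG)
      (Set.Ioi (0:ℝ)) := (O2 x).2.1
  rw [hderiv2 x]
  constructor
  · have := setIntegral_mono_on iexp_c iF measurableSet_Ioi (fun t ht => (key t ht).1)
    rw [integral_const_mul, hexpint] at this
    calc c / ρ = c * (1 / ρ) := by ring
      _ ≤ _ := this
  · have := setIntegral_mono_on iF iexp_C measurableSet_Ioi (fun t ht => (key t ht).2)
    rw [integral_const_mul, hexpint] at this
    calc (∫ t in Set.Ioi (0:ℝ),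
          Real.exp (-ρ * t) * ∫ z, deriv (deriv h) (x + σ * Real.sqrt t * z) ∂stdG)
        ≤ C * (1 / ρ) := this
      _ = C / ρ := by ring
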